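/- Let n ≥ 1 and T ≥ n be integers, let U = (ū_0,…,ū_T), Y = (ȳ_0,…,ȳ_T) be real data sequences with Σ_{U,Y} nonempty, and let σ ∈ ℂ. Then the data (U,Y) is informative for interpolation at σ (i.e., there exists a unique M ∈ ℂ with Σ_{U,Y} ⊆ Σ_{σ,M}) if and only if both rank conditions hold: (i) rank [H_n(U), 0, γ_n(σ); H_n(Y), γ_n(σ), 0] = rank [H_n(U), 0; H_n(Y), γ_n(σ)], and (ii) rank [H_n(U), 0; H_n(Y), γ_n(σ)] = rank [H_n(U); H_n(Y)] + 1, where all ranks are of complex matrices. -/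

import Mathlib

open Matrix

/-- The Hankel matrix of depth `n` (over `ℂ`) of a real data sequence `u = (u 0, …, u T)`:
its `(i,j)` entry is `u (i+j)`. -/
noncomputable def hankelC (u : ℕ → ℝ) (n T : ℕ) : Matrix (Fin (n + 1)) (Fin (T - n + 1)) ℂ :=
  fun i j => (u ((i : ℕ) + (j : ℕ)) : ℂ)

/-- `γ_n(σ) = (1, σ, …, σ^n)ᵀ`. -/
noncomputable def gammaVec (n : ℕ) (σ : ℂ) : Fin (n + 1) → ℂ :=
  fun i => σ ^ (i : ℕ)

/-- A parameter row vector `θ = [q, -p] ∈ ℝ^{2n+1}` belongs to `Σ_{U,Y}`, i.e.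
`[q -p]·[H_n(U); H̄_n(Y)] = [y_n ⋯ y_T]`. -/
def inSigmaUY (n T : ℕ) (u y : ℕ → ℝ) (θ : Fin (2 * n + 1) → ℝ) : Prop :=
  ∀ j : Fin (T - n + 1),
    (∑ i : Fin (2 * n + 1),
      θ i * (if (i : ℕ) < n + 1 then u ((i : ℕ) + (j : ℕ))
             else y ((i : ℕ) - (n + 1) + (j : ℕ)))) = y (n + (j : ℕ))

/-- A parameter row vector `θ = [q, -p] ∈ ℝ^{2n+1}` belongs to `Σ_{σ,M}`, i.e.
`[q -p]·[γ_n(σ); M·γ_{n-1}(σ)] = M·σ^n`. -/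
def inSigmaM (n : ℕ) (σ M : ℂ) (θ : Fin (2 * n + 1) → ℝ) : Prop :=
  (∑ i : Fin (2 * n + 1),
    (θ i : ℂ) * (if (i : ℕ) < n + 1 then σ ^ (i : ℕ)
                 else M * σ ^ ((i : ℕ) - (n + 1)))) = M * σ ^ n

/-- The stacked matrix `[H_n(U); H_n(Y)]` over `ℂ`. -/
noncomputable def stackUY (u y : ℕ → ℝ) (n T : ℕ) :
    Matrix (Fin (n + 1) ⊕ Fin (n + 1)) (Fin (T - n + 1)) ℂ :=
  Matrix.fromRows (hankelC u n T) (hankelC y n T)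

/-- The column `(0; γ_n(σ))`. -/
noncomputable def colZeroGamma (n : ℕ) (σ : ℂ) :
    Matrix (Fin (n + 1) ⊕ Fin (n + 1)) (Fin 1) ℂ :=
  Matrix.of fun i _ => Sum.elim (fun _ : Fin (n + 1) => (0 : ℂ)) (fun k : Fin (n + 1) => σ ^ (k : ℕ)) i

/-- The column `(γ_n(σ); 0)`. -/
noncomputable def colGammaZero (n : ℕ) (σ : ℂ) :
    Matrix (Fin (n + 1) ⊕ Fin (n + 1)) (Fin 1) ℂ :=
  Matrix.of fun i _ => Sum.elim (fun k : Fin (n + 1) => σ ^ (k : ℕ)) (fun _ : Fin (n + 1) => (0 : ℂ)) i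

section MainAux

open Matrix

variable {m ι : Type*} [Fintype m] [Fintype ι] [DecidableEq m] [DecidableEq ι]

set_option linter.unusedSectionVars false

lemma range_fromColumns_col (M : Matrix m ι ℂ) (b : m → ℂ) :
    LinearMap.range (Matrix.fromCols M (Matrix.of fun i (_ : Fin 1) => b i)).mulVecLin
      = LinearMap.range M.mulVecLin ⊔ (ℂ ∙ b) := by
  apply le_antisymm
  · rintro x ⟨w, rfl⟩
    have hw : w = Sum.elim (w ∘ Sum.inl) (w ∘ Sum.inr) := by ext (i | i) <;> rfl
    rw [Matrix.mulVecLin_apply, hw, Matrix.fromCols_mulVec_sumElim]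
    refine Submodule.add_mem_sup ⟨_, rfl⟩ ?_
    have : (Matrix.of fun i (_ : Fin 1) => b i) *ᵥ (w ∘ Sum.inr) = (w (Sum.inr 0)) • b := by
      ext i
      simp [Matrix.mulVec, dotProduct, Fin.sum_univ_one, mul_comm]
    rw [this]
    exact Submodule.smul_mem _ _ (Submodule.mem_span_singleton_self b)
  · rw [sup_le_iff]
    constructor
    · rintro x ⟨w, rfl⟩
      refine ⟨Sum.elim w 0, ?_⟩
      rw [Matrix.mulVecLin_apply, Matrix.fromCols_mulVec_sumElim]
      simp
    · rw [Submodule.span_le, Set.singleton_subset_iff]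
      refine ⟨Sum.elim 0 (fun _ => 1), ?_⟩
      rw [Matrix.mulVecLin_apply, Matrix.fromCols_mulVec_sumElim]
      ext i
      simp [Matrix.mulVec, dotProduct, Fin.sum_univ_one]

lemma rank_fromColumns_col_eq_iff (M : Matrix m ι ℂ) (b : m → ℂ) :
    (Matrix.fromCols M (Matrix.of fun i (_ : Fin 1) => b i)).rank = M.rank ↔
      b ∈ LinearMap.range M.mulVecLin := by
  rw [Matrix.rank, Matrix.rank, range_fromColumns_col]
  constructor
  · intro h
    have hle : LinearMap.range M.mulVecLin ≤ LinearMap.range M.mulVecLin ⊔ (ℂ ∙ b) :=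
      le_sup_left
    have := Submodule.eq_of_le_of_finrank_le hle h.le
    rw [this]
    exact le_sup_right (α := Submodule ℂ (m → ℂ)) (Submodule.mem_span_singleton_self b)
  · intro hb
    have : (ℂ ∙ b) ≤ LinearMap.range M.mulVecLin := by
      rw [Submodule.span_le, Set.singleton_subset_iff]; exact hb
    rw [sup_eq_left.mpr this]

lemma rank_fromColumns_col_succ (M : Matrix m ι ℂ) (b : m → ℂ)
    (hb : b ∉ LinearMap.range M.mulVecLin) :
    (Matrix.fromCols M (Matrix.of fun i (_ : Fin 1) => b i)).rank = M.rank + 1 := by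
  have hb0 : b ≠ 0 := fun h => hb (h ▸ Submodule.zero_mem _)
  rw [Matrix.rank, Matrix.rank, range_fromColumns_col]
  have hinf : LinearMap.range M.mulVecLin ⊓ (ℂ ∙ b) = ⊥ := by
    rw [eq_bot_iff]
    rintro x ⟨hx1, hx2⟩
    obtain ⟨c, rfl⟩ := Submodule.mem_span_singleton.mp hx2
    rcases eq_or_ne c 0 with rfl | hc
    · simp
    · exact absurd (by simpa using Submodule.smul_mem _ c⁻¹ hx1) (by simpa [hc] using hb)
  have := Submodule.finrank_sup_add_finrank_inf_eq (LinearMap.range M.mulVecLin) (ℂ ∙ b)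
  rw [hinf, finrank_bot, add_zero, finrank_span_singleton hb0] at this
  exact this

lemma rank_fromColumns_col_succ_iff (M : Matrix m ι ℂ) (b : m → ℂ) :
    (Matrix.fromCols M (Matrix.of fun i (_ : Fin 1) => b i)).rank = M.rank + 1 ↔
      b ∉ LinearMap.range M.mulVecLin := by
  constructor
  · intro h hb
    rw [(rank_fromColumns_col_eq_iff M b).mpr hb] at h
    omega
  · exact rank_fromColumns_col_succ M b

lemma mem_range_mulVecLin_iff_dot (M : Matrix m ι ℂ) (b : m → ℂ) :
    b ∈ LinearMap.range M.mulVecLin ↔ ∀ v : m → ℂ, v ᵥ* M = 0 → v ⬝ᵥ b = 0 := by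
  constructor
  · rintro ⟨x, rfl⟩ v hv
    rw [Matrix.mulVecLin_apply, Matrix.dotProduct_mulVec, hv, zero_dotProduct]
  · intro h
    by_contra hb
    obtain ⟨f, hfb, hmap⟩ := Submodule.exists_dual_map_eq_bot_of_notMem hb inferInstance
    have hf0 : ∀ z ∈ LinearMap.range M.mulVecLin, f z = 0 := by
      intro z hz
      have : f z ∈ Submodule.map f (LinearMap.range M.mulVecLin) :=
        Submodule.mem_map_of_mem hz
      rw [hmap] at this
      simpa using this
    set v : m → ℂ := fun i => f (fun j => if i = j then 1 else 0) with hv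
    have hfx : ∀ x : m → ℂ, f x = ∑ i, x i * v i := by
      intro x
      rw [LinearMap.pi_apply_eq_sum_univ f x]
      simp [hv, smul_eq_mul]
    have hvM : v ᵥ* M = 0 := by
      ext j
      have hcol : (fun i => M i j) ∈ LinearMap.range M.mulVecLin := by
        refine ⟨fun k => if k = j then 1 else 0, ?_⟩
        ext i
        simp [Matrix.mulVecLin_apply, Matrix.mulVec, dotProduct]
      have := hf0 _ hcol
      rw [hfx] at this
      simpa [Matrix.vecMul, dotProduct, mul_comm] using this
    have := h v hvM
    rw [dotProduct] at this
    exact hfb (by rw [hfx]; simpa [mul_comm] using this)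

lemma vecMul_fromColumns_zero_iff (M : Matrix m ι ℂ) (b : m → ℂ) (v : m → ℂ) :
    v ᵥ* (Matrix.fromCols M (Matrix.of fun i (_ : Fin 1) => b i)) = 0 ↔
      v ᵥ* M = 0 ∧ v ⬝ᵥ b = 0 := by
  rw [Matrix.vecMul_fromCols]
  constructor
  · intro h
    refine ⟨funext fun j => congrFun h (Sum.inl j), ?_⟩
    have := congrFun h (Sum.inr 0)
    simpa [Matrix.vecMul, dotProduct] using this
  · rintro ⟨h1, h2⟩
    funext j
    rcases j with j | j
    · exact congrFun h1 j
    · simpa [Matrix.vecMul, dotProduct] using h2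

lemma vecMul_re_im (A : Matrix m ι ℂ)
    (him : ∀ i j, (A i j).im = 0) (v : m → ℂ) (hv : v ᵥ* A = 0) :
    (fun i => ((v i).re : ℂ)) ᵥ* A = 0 ∧ (fun i => ((v i).im : ℂ)) ᵥ* A = 0 := by
  have h0 : ∀ j, ∑ i, v i * A i j = 0 := by
    intro j
    have := congrFun hv j
    simpa [Matrix.vecMul, dotProduct] using this
  have hAre : ∀ i j, A i j = ((A i j).re : ℂ) := by
    intro i j
    apply Complex.ext
    · simp
    · simp [him]
  constructor
  · funext j
    have hre : ∑ i, (v i).re * (A i j).re = 0 := by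
      have := congrArg Complex.re (h0 j)
      simpa [Complex.re_sum, Complex.mul_re, him] using this
    show ∑ i, ((v i).re : ℂ) * A i j = 0
    calc ∑ i, ((v i).re : ℂ) * A i j
        = ((∑ i, (v i).re * (A i j).re : ℝ) : ℂ) := by
          push_cast
          exact Finset.sum_congr rfl fun i _ => by rw [← hAre]
      _ = 0 := by rw [hre]; simp
  · funext j
    have hire : ∑ i, (v i).im * (A i j).re = 0 := by
      have := congrArg Complex.im (h0 j)
      simpa [Complex.im_sum, Complex.mul_im, him] using this
    show ∑ i, ((v i).im : ℂ) * A i j = 0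
    calc ∑ i, ((v i).im : ℂ) * A i j
        = ((∑ i, (v i).im * (A i j).re : ℝ) : ℂ) := by
          push_cast
          exact Finset.sum_congr rfl fun i _ => by rw [← hAre]
      _ = 0 := by rw [hire]; simp

lemma dot_decomp (v c : m → ℂ) :
    v ⬝ᵥ c = (fun i => ((v i).re : ℂ)) ⬝ᵥ c + Complex.I * ((fun i => ((v i).im : ℂ)) ⬝ᵥ c) := by
  simp only [dotProduct, Finset.mul_sum, ← Finset.sum_add_distrib]
  refine Finset.sum_congr rfl fun i _ => ?_
  conv_lhs => rw [← Complex.re_add_im (v i)]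
  ring

end MainAux

section MainBridge

open Matrix

lemma sum_split {M : Type*} [AddCommMonoid M] (n : ℕ) (f : Fin (2 * n + 1) → M) :
    ∑ i, f i = (∑ i : Fin (n + 1), f ⟨(i : ℕ), by omega⟩)
      + ∑ k : Fin n, f ⟨n + 1 + (k : ℕ), by omega⟩ := by
  rw [← Equiv.sum_comp (finSumFinEquiv.trans (finCongr (by omega : n + 1 + n = 2 * n + 1))) f,
    Fintype.sum_sum_type]
  congr 1

noncomputable def embedR (n : ℕ) (θ : Fin (2 * n + 1) → ℝ) : (Fin (n + 1) ⊕ Fin (n + 1)) → ℝ :=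
  Sum.elim (fun i => θ ⟨(i : ℕ), by omega⟩)
    (fun k => if h : (k : ℕ) < n then θ ⟨n + 1 + (k : ℕ), by omega⟩ else -1)

noncomputable def CC {m : Type*} (v : m → ℝ) : m → ℂ := fun i => (v i : ℂ)

lemma embedR_last (n : ℕ) (θ : Fin (2 * n + 1) → ℝ) :
    embedR n θ (Sum.inr (Fin.last n)) = -1 := by
  simp [embedR]

noncomputable def decode (n : ℕ) (v : (Fin (n + 1) ⊕ Fin (n + 1)) → ℝ) :
    Fin (2 * n + 1) → ℝ :=
  fun i => if h : (i : ℕ) < n + 1 then v (Sum.inl ⟨(i : ℕ), h⟩)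
    else v (Sum.inr ⟨(i : ℕ) - (n + 1), by omega⟩)

lemma embedR_decode (n : ℕ) (v : (Fin (n + 1) ⊕ Fin (n + 1)) → ℝ)
    (hlast : v (Sum.inr (Fin.last n)) = -1) :
    embedR n (decode n v) = v := by
  funext i
  rcases i with i | k
  · simp only [embedR, Sum.elim_inl, decode]
    rw [dif_pos (show ((⟨(i : ℕ), by omega⟩ : Fin (2 * n + 1)) : ℕ) < n + 1 from i.isLt)]
  · simp only [embedR, Sum.elim_inr]
    rcases lt_or_ge (k : ℕ) n with h | h
    · rw [dif_pos h]
      simp only [decode]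
      rw [dif_neg (show ¬ ((⟨n + 1 + (k : ℕ), by omega⟩ : Fin (2 * n + 1)) : ℕ) < n + 1 from by
        show ¬ n + 1 + (k : ℕ) < n + 1; omega)]
      congr 1
      congr 1
      apply Fin.ext
      show n + 1 + (k : ℕ) - (n + 1) = (k : ℕ)
      omega
    · have hk : k = Fin.last n := by
        apply Fin.ext
        have := k.isLt
        simp only [Fin.val_last]
        omega
      rw [dif_neg (show ¬ (k : ℕ) < n by omega), hk, hlast]

/-- The column vector `(0; γ_n(σ))` as a plain vector. -/
noncomputable def c1v (n : ℕ) (σ : ℂ) : (Fin (n + 1) ⊕ Fin (n + 1)) → ℂ :=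
  fun i => colZeroGamma n σ i 0

/-- The column vector `(γ_n(σ); 0)` as a plain vector. -/
noncomputable def c2v (n : ℕ) (σ : ℂ) : (Fin (n + 1) ⊕ Fin (n + 1)) → ℂ :=
  fun i => colGammaZero n σ i 0

lemma sigmaUY_iff (n T : ℕ) (u y : ℕ → ℝ) (θ : Fin (2 * n + 1) → ℝ) :
    inSigmaUY n T u y θ ↔ CC (embedR n θ) ᵥ* stackUY u y n T = 0 := by
  have key : ∀ j : Fin (T - n + 1),
      (CC (embedR n θ) ᵥ* stackUY u y n T) j
        = ((∑ i : Fin (2 * n + 1),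
            θ i * (if (i : ℕ) < n + 1 then u ((i : ℕ) + (j : ℕ))
              else y ((i : ℕ) - (n + 1) + (j : ℕ)))
            - y (n + (j : ℕ)) : ℝ) : ℂ) := by
    intro j
    rw [sum_split n (fun i => θ i * (if (i : ℕ) < n + 1 then u ((i : ℕ) + (j : ℕ))
              else y ((i : ℕ) - (n + 1) + (j : ℕ))))]
    have h1 : (∑ i : Fin (n + 1),
        θ ⟨(i : ℕ), by omega⟩ * (if ((⟨(i : ℕ), by omega⟩ : Fin (2 * n + 1)) : ℕ) < n + 1
          then u (((⟨(i : ℕ), by omega⟩ : Fin (2 * n + 1)) : ℕ) + (j : ℕ))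
          else y (((⟨(i : ℕ), by omega⟩ : Fin (2 * n + 1)) : ℕ) - (n + 1) + (j : ℕ))))
        = ∑ i : Fin (n + 1), θ ⟨(i : ℕ), by omega⟩ * u ((i : ℕ) + (j : ℕ)) := by
      refine Finset.sum_congr rfl fun i _ => ?_
      rw [if_pos]
      exact i.isLt
    have h2 : (∑ k : Fin n,
        θ ⟨n + 1 + (k : ℕ), by omega⟩
          * (if ((⟨n + 1 + (k : ℕ), by omega⟩ : Fin (2 * n + 1)) : ℕ) < n + 1
          then u (((⟨n + 1 + (k : ℕ), by omega⟩ : Fin (2 * n + 1)) : ℕ) + (j : ℕ))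
          else y (((⟨n + 1 + (k : ℕ), by omega⟩ : Fin (2 * n + 1)) : ℕ) - (n + 1) + (j : ℕ))))
        = ∑ k : Fin n, θ ⟨n + 1 + (k : ℕ), by omega⟩ * y ((k : ℕ) + (j : ℕ)) := by
      refine Finset.sum_congr rfl fun k _ => ?_
      rw [if_neg (show ¬ ((⟨n + 1 + (k : ℕ), by omega⟩ : Fin (2 * n + 1)) : ℕ) < n + 1 from by
        show ¬ n + 1 + (k : ℕ) < n + 1; omega)]
      congr 2
      show n + 1 + (k : ℕ) - (n + 1) + (j : ℕ) = (k : ℕ) + (j : ℕ)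
      omega
    rw [h1, h2]
    have lhs1 : (CC (embedR n θ) ᵥ* stackUY u y n T) j
        = (∑ i : Fin (n + 1), ((θ ⟨(i : ℕ), by omega⟩ : ℝ) : ℂ) * (u ((i : ℕ) + (j : ℕ)) : ℂ))
          + ∑ k : Fin (n + 1),
            ((if h : (k : ℕ) < n then (θ ⟨n + 1 + (k : ℕ), by omega⟩ : ℝ) else -1 : ℝ) : ℂ)
              * (y ((k : ℕ) + (j : ℕ)) : ℂ) := by
      simp [Matrix.vecMul, dotProduct, Fintype.sum_sum_type, CC, embedR, stackUY,
        Matrix.fromRows, hankelC]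
      rfl
    have h3 : (∑ k : Fin (n + 1),
        ((if h : (k : ℕ) < n then (θ ⟨n + 1 + (k : ℕ), by omega⟩ : ℝ) else -1 : ℝ) : ℂ)
          * (y ((k : ℕ) + (j : ℕ)) : ℂ))
        = (∑ k : Fin n, ((θ ⟨n + 1 + (k : ℕ), by omega⟩ : ℝ) : ℂ) * (y ((k : ℕ) + (j : ℕ)) : ℂ))
          + (-1 : ℂ) * (y (n + (j : ℕ)) : ℂ) := by
      rw [Fin.sum_univ_castSucc]
      congr 1
      · refine Finset.sum_congr rfl fun k _ => ?_
        rw [dif_pos (show ((Fin.castSucc k : Fin (n + 1)) : ℕ) < n from k.isLt)]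
        rfl
      · rw [dif_neg (show ¬ ((Fin.last n : Fin (n + 1)) : ℕ) < n from by
          show ¬ n < n; omega)]
        push_cast
        ring
    rw [lhs1, h3]
    push_cast
    ring
  constructor
  · intro h
    funext j
    rw [key j, h j]
    simp
  · intro h j
    have := congrFun h j
    rw [key j] at this
    simp only [Pi.zero_apply] at this
    have h2 : (∑ i : Fin (2 * n + 1),
        θ i * (if (i : ℕ) < n + 1 then u ((i : ℕ) + (j : ℕ))
          else y ((i : ℕ) - (n + 1) + (j : ℕ)))) - y (n + (j : ℕ)) = 0 := by
      exact_mod_cast this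
    linarith

lemma sigmaM_iff (n : ℕ) (σ M : ℂ) (θ : Fin (2 * n + 1) → ℝ) :
    inSigmaM n σ M θ ↔
      CC (embedR n θ) ⬝ᵥ c2v n σ + M * (CC (embedR n θ) ⬝ᵥ c1v n σ) = 0 := by
  have hd2 : CC (embedR n θ) ⬝ᵥ c2v n σ
      = ∑ i : Fin (n + 1), ((θ ⟨(i : ℕ), by omega⟩ : ℝ) : ℂ) * σ ^ (i : ℕ) := by
    simp [dotProduct, Fintype.sum_sum_type, CC, embedR, c2v, colGammaZero]
  have hd1 : CC (embedR n θ) ⬝ᵥ c1v n σ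
      = (∑ k : Fin n, ((θ ⟨n + 1 + (k : ℕ), by omega⟩ : ℝ) : ℂ) * σ ^ (k : ℕ)) - σ ^ n := by
    have step : CC (embedR n θ) ⬝ᵥ c1v n σ
        = ∑ k : Fin (n + 1),
            ((if h : (k : ℕ) < n then (θ ⟨n + 1 + (k : ℕ), by omega⟩ : ℝ) else -1 : ℝ) : ℂ)
              * σ ^ (k : ℕ) := by
      simp [dotProduct, Fintype.sum_sum_type, CC, embedR, c1v, colZeroGamma]
    rw [step, Fin.sum_univ_castSucc]
    have e1 : (∑ k : Fin n,
        ((if h : ((Fin.castSucc k : Fin (n + 1)) : ℕ) < n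
          then (θ ⟨n + 1 + ((Fin.castSucc k : Fin (n + 1)) : ℕ), by omega⟩ : ℝ) else -1 : ℝ) : ℂ)
          * σ ^ ((Fin.castSucc k : Fin (n + 1)) : ℕ))
        = ∑ k : Fin n, ((θ ⟨n + 1 + (k : ℕ), by omega⟩ : ℝ) : ℂ) * σ ^ (k : ℕ) := by
      refine Finset.sum_congr rfl fun k _ => ?_
      rw [dif_pos (show ((Fin.castSucc k : Fin (n + 1)) : ℕ) < n from k.isLt)]
      rfl
    rw [e1, dif_neg (show ¬ ((Fin.last n : Fin (n + 1)) : ℕ) < n from by show ¬ n < n; omega)]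
    push_cast
    show _ + (-1 : ℂ) * σ ^ ((Fin.last n : Fin (n + 1)) : ℕ) = _
    rw [show ((Fin.last n : Fin (n + 1)) : ℕ) = n from rfl]
    ring
  have key : (∑ i : Fin (2 * n + 1),
      (θ i : ℂ) * (if (i : ℕ) < n + 1 then σ ^ (i : ℕ) else M * σ ^ ((i : ℕ) - (n + 1))))
      = CC (embedR n θ) ⬝ᵥ c2v n σ
        + M * (CC (embedR n θ) ⬝ᵥ c1v n σ) + M * σ ^ n := by
    rw [sum_split n (fun i => (θ i : ℂ)
      * (if (i : ℕ) < n + 1 then σ ^ (i : ℕ) else M * σ ^ ((i : ℕ) - (n + 1))))]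
    have h1 : (∑ i : Fin (n + 1), ((θ ⟨(i : ℕ), by omega⟩ : ℝ) : ℂ)
        * (if ((⟨(i : ℕ), by omega⟩ : Fin (2 * n + 1)) : ℕ) < n + 1
           then σ ^ ((⟨(i : ℕ), by omega⟩ : Fin (2 * n + 1)) : ℕ)
           else M * σ ^ (((⟨(i : ℕ), by omega⟩ : Fin (2 * n + 1)) : ℕ) - (n + 1))))
        = ∑ i : Fin (n + 1), ((θ ⟨(i : ℕ), by omega⟩ : ℝ) : ℂ) * σ ^ (i : ℕ) := by
      refine Finset.sum_congr rfl fun i _ => ?_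
      rw [if_pos]
      exact i.isLt
    have h2 : (∑ k : Fin n, ((θ ⟨n + 1 + (k : ℕ), by omega⟩ : ℝ) : ℂ)
        * (if ((⟨n + 1 + (k : ℕ), by omega⟩ : Fin (2 * n + 1)) : ℕ) < n + 1
           then σ ^ ((⟨n + 1 + (k : ℕ), by omega⟩ : Fin (2 * n + 1)) : ℕ)
           else M * σ ^ (((⟨n + 1 + (k : ℕ), by omega⟩ : Fin (2 * n + 1)) : ℕ) - (n + 1))))
        = M * ∑ k : Fin n, ((θ ⟨n + 1 + (k : ℕ), by omega⟩ : ℝ) : ℂ) * σ ^ (k : ℕ) := by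
      rw [Finset.mul_sum]
      refine Finset.sum_congr rfl fun k _ => ?_
      rw [if_neg (show ¬ ((⟨n + 1 + (k : ℕ), by omega⟩ : Fin (2 * n + 1)) : ℕ) < n + 1 from by
        show ¬ n + 1 + (k : ℕ) < n + 1; omega)]
      rw [show ((⟨n + 1 + (k : ℕ), by omega⟩ : Fin (2 * n + 1)) : ℕ) - (n + 1) = (k : ℕ) from by
        show n + 1 + (k : ℕ) - (n + 1) = (k : ℕ); omega]
      ring
    rw [h1, h2, hd1, hd2]
    ring
  unfold inSigmaM
  rw [key]
  constructor
  · intro h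
    linear_combination h
  · intro h
    linear_combination h

end MainBridge

/-- **Theorem 2 of the paper.** With `Σ_{U,Y}` nonempty, the data `(U,Y)` is
informative for interpolation at `σ` (there exists a unique `M` with `Σ_{U,Y} ⊆ Σ_{σ,M}`)
iff both rank conditions hold:
`rank [H_n(U), 0, γ_n(σ); H_n(Y), γ_n(σ), 0] = rank [H_n(U), 0; H_n(Y), γ_n(σ)]` and
`rank [H_n(U), 0; H_n(Y), γ_n(σ)] = rank [H_n(U); H_n(Y)] + 1`. -/
theorem informative_iff_rank_conditions (n T : ℕ) (hn : 1 ≤ n) (hT : n ≤ T)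
    (u y : ℕ → ℝ) (σ : ℂ)
    (hne : ∃ θ : Fin (2 * n + 1) → ℝ, inSigmaUY n T u y θ) :
    (∃! M : ℂ, ∀ θ : Fin (2 * n + 1) → ℝ, inSigmaUY n T u y θ → inSigmaM n σ M θ) ↔
      ((Matrix.fromCols (Matrix.fromCols (stackUY u y n T) (colZeroGamma n σ))
          (colGammaZero n σ)).rank =
        (Matrix.fromCols (stackUY u y n T) (colZeroGamma n σ)).rank ∧
       (Matrix.fromCols (stackUY u y n T) (colZeroGamma n σ)).rank =
        (stackUY u y n T).rank + 1) := by
  classical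
  obtain ⟨θ0, hθ0⟩ := hne
  have hg1 : colZeroGamma n σ = Matrix.of fun i (_ : Fin 1) => c1v n σ i := rfl
  have hg2 : colGammaZero n σ = Matrix.of fun i (_ : Fin 1) => c2v n σ i := rfl
  -- rank condition 2
  have hr2 : ((Matrix.fromCols (stackUY u y n T) (colZeroGamma n σ)).rank
        = (stackUY u y n T).rank + 1)
      ↔ ∃ v, v ᵥ* stackUY u y n T = 0 ∧ v ⬝ᵥ c1v n σ ≠ 0 := by
    rw [hg1, rank_fromColumns_col_succ_iff, mem_range_mulVecLin_iff_dot]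
    push_neg
    rfl
  -- rank condition 1
  have hr1 : ((Matrix.fromCols (Matrix.fromCols (stackUY u y n T) (colZeroGamma n σ))
          (colGammaZero n σ)).rank
        = (Matrix.fromCols (stackUY u y n T) (colZeroGamma n σ)).rank)
      ↔ ∀ v, v ᵥ* stackUY u y n T = 0 → v ⬝ᵥ c1v n σ = 0 → v ⬝ᵥ c2v n σ = 0 := by
    rw [hg2, rank_fromColumns_col_eq_iff, mem_range_mulVecLin_iff_dot]
    constructor
    · intro h v hv h1
      refine h v ?_
      rw [hg1, vecMul_fromColumns_zero_iff]
      exact ⟨hv, h1⟩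
    · intro h v hv
      rw [hg1, vecMul_fromColumns_zero_iff] at hv
      exact h v hv.1 hv.2
  -- entries of the stacked matrix are real
  have him : ∀ i j, ((stackUY u y n T) i j).im = 0 := by
    rintro (i | i) j <;> simp [stackUY, hankelC, Matrix.fromRows] <;> exact Complex.ofReal_im _
  have hv0 : CC (embedR n θ0) ᵥ* stackUY u y n T = 0 := (sigmaUY_iff n T u y θ0).mp hθ0
  -- bridge: the interpolation condition in terms of the complex left null space
  have hPQ : ∀ M : ℂ,
      (∀ θ, inSigmaUY n T u y θ → inSigmaM n σ M θ) ↔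
      (∀ v : (Fin (n + 1) ⊕ Fin (n + 1)) → ℂ,
        v ᵥ* stackUY u y n T = 0 → v ⬝ᵥ c2v n σ + M * (v ⬝ᵥ c1v n σ) = 0) := by
    intro M
    constructor
    · intro hP
      have key : ∀ w' : (Fin (n + 1) ⊕ Fin (n + 1)) → ℝ, w' (Sum.inr (Fin.last n)) = -1 →
          CC w' ᵥ* stackUY u y n T = 0 →
          CC w' ⬝ᵥ c2v n σ + M * (CC w' ⬝ᵥ c1v n σ) = 0 := by
        intro w' hlast hnull
        have hdec := embedR_decode n w' hlast
        have hθ' : inSigmaUY n T u y (decode n w') :=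
          (sigmaUY_iff n T u y _).mpr (by rw [hdec]; exact hnull)
        have h1 := (sigmaM_iff n σ M _).mp (hP _ hθ')
        rw [hdec] at h1
        exact h1
      have h0 := key (embedR n θ0) (embedR_last n θ0) hv0
      have hreal : ∀ w : (Fin (n + 1) ⊕ Fin (n + 1)) → ℝ,
          CC w ᵥ* stackUY u y n T = 0 →
          CC w ⬝ᵥ c2v n σ + M * (CC w ⬝ᵥ c1v n σ) = 0 := by
        intro w hw
        set l : ℝ := w (Sum.inr (Fin.last n)) with hl
        have hCC : CC (fun i => embedR n θ0 i + (w i + l * embedR n θ0 i))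
            = CC (embedR n θ0) + (CC w + (l : ℂ) • CC (embedR n θ0)) := by
          funext i
          simp only [CC, Pi.add_apply, Pi.smul_apply, smul_eq_mul]
          push_cast
          ring
        have hlast : (fun i => embedR n θ0 i + (w i + l * embedR n θ0 i))
            (Sum.inr (Fin.last n)) = -1 := by
          show embedR n θ0 _ + (w _ + l * embedR n θ0 _) = -1
          rw [embedR_last, ← hl]
          ring
        have hnull : CC (fun i => embedR n θ0 i + (w i + l * embedR n θ0 i))
            ᵥ* stackUY u y n T = 0 := by
          rw [hCC, Matrix.add_vecMul, Matrix.add_vecMul, Matrix.smul_vecMul, hv0, hw]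
          simp
        have h1 := key _ hlast hnull
        rw [hCC] at h1
        simp only [add_dotProduct, smul_dotProduct, smul_eq_mul] at h1
        linear_combination h1 - (1 + (l : ℂ)) * h0
      intro v hv
      obtain ⟨hre, him2⟩ := vecMul_re_im (stackUY u y n T) him v hv
      have h1 := hreal (fun i => (v i).re) hre
      have h2 := hreal (fun i => (v i).im) him2
      unfold CC at h1 h2
      rw [dot_decomp v (c2v n σ), dot_decomp v (c1v n σ)]
      linear_combination h1 + Complex.I * h2
    · intro hQ θ hθ
      rw [sigmaM_iff]
      exact hQ _ ((sigmaUY_iff n T u y θ).mp hθ)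
  rw [hr1, hr2, existsUnique_congr hPQ]
  constructor
  · rintro ⟨M, hQM, huniq⟩
    constructor
    · intro v hv h1
      have h := hQM v hv
      rw [h1, mul_zero, add_zero] at h
      exact h
    · by_contra hcon
      push_neg at hcon
      have hQ' : ∀ v : (Fin (n + 1) ⊕ Fin (n + 1)) → ℂ,
          v ᵥ* stackUY u y n T = 0 → v ⬝ᵥ c2v n σ + (M + 1) * (v ⬝ᵥ c1v n σ) = 0 := by
        intro v hv
        have h0 := hQM v hv
        have h1 := hcon v hv
        rw [h1] at h0 ⊢
        linear_combination h0
      have hM1 := huniq (M + 1) hQ'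
      exact one_ne_zero (by linear_combination hM1)
  · rintro ⟨hR1, z, hz, hz1⟩
    refine ⟨-(z ⬝ᵥ c2v n σ) / (z ⬝ᵥ c1v n σ), ?_, ?_⟩
    · intro v hv
      have hv' : (v - ((v ⬝ᵥ c1v n σ) / (z ⬝ᵥ c1v n σ)) • z) ᵥ* stackUY u y n T = 0 := by
        rw [Matrix.sub_vecMul, Matrix.smul_vecMul, hv, hz]
        simp
      have h1 : (v - ((v ⬝ᵥ c1v n σ) / (z ⬝ᵥ c1v n σ)) • z) ⬝ᵥ c1v n σ = 0 := by
        rw [sub_dotProduct, smul_dotProduct, smul_eq_mul,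
          div_mul_cancel₀ _ hz1, sub_self]
      have h2 := hR1 _ hv' h1
      rw [sub_dotProduct, smul_dotProduct, smul_eq_mul] at h2
      linear_combination h2
    · intro M' hM'
      have h1 := hM' z hz
      rw [eq_div_iff hz1]
      linear_combination h1
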